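/- Coercivity of the discrete MPFC energy: there exists a constant C₅ > 0 depending only on α (not on h, m, n, L_x, L_y) such that for every periodic grid function φ, F(φ) ≥ C₅·‖φ‖_{2,2}² − (L_x·L_y)/4. -/

import Mathlib

open Finset

noncomputable section

/-- Periodic grid functions on an `m × n` grid (indices taken modulo `m` and `n`). -/
abbrev Grid (m n : ℕ) := ZMod m × ZMod n → ℝ

/-- Forward difference in the `x` direction. -/
def Dx {m n : ℕ} (h : ℝ) (φ : Grid m n) : Grid m n :=
  fun p => (φ (p.1 + 1, p.2) - φ p) / h

/-- Forward difference in the `y` direction. -/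
def Dy {m n : ℕ} (h : ℝ) (φ : Grid m n) : Grid m n :=
  fun p => (φ (p.1, p.2 + 1) - φ p) / h

/-- The five-point discrete Laplacian. -/
def lapH {m n : ℕ} (h : ℝ) (φ : Grid m n) : Grid m n :=
  fun p => (φ (p.1 + 1, p.2) + φ (p.1 - 1, p.2) + φ (p.1, p.2 + 1) + φ (p.1, p.2 - 1)
    - 4 * φ p) / h ^ 2

/-- Discrete `L²` norm. -/
def norm2 {m n : ℕ} [NeZero m] [NeZero n] (h : ℝ) (φ : Grid m n) : ℝ :=
  Real.sqrt (h ^ 2 * ∑ p : ZMod m × ZMod n, φ p ^ 2)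

/-- Discrete `L²` norm of the gradient. -/
def gradNorm2 {m n : ℕ} [NeZero m] [NeZero n] (h : ℝ) (φ : Grid m n) : ℝ :=
  Real.sqrt (h ^ 2 * ∑ p : ZMod m × ZMod n, (Dx h φ p ^ 2 + Dy h φ p ^ 2))

/-- Discrete `L⁴` norm. -/
def norm4 {m n : ℕ} [NeZero m] [NeZero n] (h : ℝ) (φ : Grid m n) : ℝ :=
  (h ^ 2 * ∑ p : ZMod m × ZMod n, φ p ^ 4) ^ ((1 : ℝ) / 4)

/-- Discrete `H²` norm. -/
def norm22 {m n : ℕ} [NeZero m] [NeZero n] (h : ℝ) (φ : Grid m n) : ℝ :=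
  Real.sqrt (norm2 h φ ^ 2 + gradNorm2 h φ ^ 2 + norm2 h (lapH h φ) ^ 2)

/-- The discrete MPFC energy
`F(φ) = ¼‖φ‖₄⁴ + (α/2)‖φ‖₂² − ‖∇ₕφ‖₂² + ½‖Δₕφ‖₂²`. -/
def energyF {m n : ℕ} [NeZero m] [NeZero n] (α h : ℝ) (φ : Grid m n) : ℝ :=
  1 / 4 * norm4 h φ ^ 4 + α / 2 * norm2 h φ ^ 2 - gradNorm2 h φ ^ 2
    + 1 / 2 * norm2 h (lapH h φ) ^ 2

/-- general shift summation identity -/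
lemma sum_shift_id {G : Type*} [AddCommGroup G] [Fintype G] [DecidableEq G]
    (φ : G → ℝ) (a b : G) :
    ∑ p : G, ((φ (p + a) - φ p) ^ 2 + (φ (p + b) - φ p) ^ 2)
      = ∑ p : G, -(φ p * (φ (p + a) + φ (p - a) + φ (p + b) + φ (p - b) - 4 * φ p)) := by
  have h1 : ∑ p : G, φ (p + a) ^ 2 = ∑ p : G, φ p ^ 2 :=
    Equiv.sum_comp (Equiv.addRight a) (fun q => φ q ^ 2)
  have h2 : ∑ p : G, φ (p + b) ^ 2 = ∑ p : G, φ p ^ 2 :=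
    Equiv.sum_comp (Equiv.addRight b) (fun q => φ q ^ 2)
  have h3 : ∑ p : G, φ (p + a) * φ p = ∑ p : G, φ p * φ (p - a) := by
    have := Equiv.sum_comp (Equiv.addRight a) (fun q => φ q * φ (q - a))
    simpa using this
  have h4 : ∑ p : G, φ (p + b) * φ p = ∑ p : G, φ p * φ (p - b) := by
    have := Equiv.sum_comp (Equiv.addRight b) (fun q => φ q * φ (q - b))
    simpa using this
  have expand : ∀ p : G, (φ (p + a) - φ p) ^ 2 + (φ (p + b) - φ p) ^ 2
      = -(φ p * (φ (p + a) + φ (p - a) + φ (p + b) + φ (p - b) - 4 * φ p))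
        + ((φ (p + a) ^ 2 - φ p ^ 2) + (φ (p + b) ^ 2 - φ p ^ 2)
        + ((φ p * φ (p - a) - φ (p + a) * φ p) + (φ p * φ (p - b) - φ (p + b) * φ p))) := by
    intro p; ring
  calc ∑ p : G, ((φ (p + a) - φ p) ^ 2 + (φ (p + b) - φ p) ^ 2)
      = ∑ p : G, (-(φ p * (φ (p + a) + φ (p - a) + φ (p + b) + φ (p - b) - 4 * φ p))
        + ((φ (p + a) ^ 2 - φ p ^ 2) + (φ (p + b) ^ 2 - φ p ^ 2)
        + ((φ p * φ (p - a) - φ (p + a) * φ p) + (φ p * φ (p - b) - φ (p + b) * φ p)))) :=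
        Finset.sum_congr rfl (fun p _ => expand p)
    _ = ∑ p : G, -(φ p * (φ (p + a) + φ (p - a) + φ (p + b) + φ (p - b) - 4 * φ p)) := by
        simp only [Finset.sum_add_distrib, Finset.sum_sub_distrib]
        rw [h1, h2, h3, h4]
        ring

lemma sbp {m n : ℕ} [NeZero m] [NeZero n] (h : ℝ) (hh : h ≠ 0) (φ : Grid m n) :
    h ^ 2 * ∑ p : ZMod m × ZMod n, (Dx h φ p ^ 2 + Dy h φ p ^ 2)
      = -(h ^ 2 * ∑ p : ZMod m × ZMod n, φ p * lapH h φ p) := by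
  have he1 : ∀ p : ZMod m × ZMod n, ((p.1 + 1, p.2) : ZMod m × ZMod n)
      = p + ((1 : ZMod m), (0 : ZMod n)) := by
    intro p; simp [Prod.ext_iff]
  have he1' : ∀ p : ZMod m × ZMod n, ((p.1 - 1, p.2) : ZMod m × ZMod n)
      = p - ((1 : ZMod m), (0 : ZMod n)) := by
    intro p; simp [Prod.ext_iff]
  have he2 : ∀ p : ZMod m × ZMod n, ((p.1, p.2 + 1) : ZMod m × ZMod n)
      = p + ((0 : ZMod m), (1 : ZMod n)) := by
    intro p; simp [Prod.ext_iff]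
  have he2' : ∀ p : ZMod m × ZMod n, ((p.1, p.2 - 1) : ZMod m × ZMod n)
      = p - ((0 : ZMod m), (1 : ZMod n)) := by
    intro p; simp [Prod.ext_iff]
  set a : ZMod m × ZMod n := ((1 : ZMod m), (0 : ZMod n))
  set b : ZMod m × ZMod n := ((0 : ZMod m), (1 : ZMod n))
  have L : ∀ p : ZMod m × ZMod n, h ^ 2 * (Dx h φ p ^ 2 + Dy h φ p ^ 2)
      = (φ (p + a) - φ p) ^ 2 + (φ (p + b) - φ p) ^ 2 := by
    intro p
    simp only [Dx, Dy, he1 p, he2 p]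
    field_simp
  have R : ∀ p : ZMod m × ZMod n, -(h ^ 2 * (φ p * lapH h φ p))
      = -(φ p * (φ (p + a) + φ (p - a) + φ (p + b) + φ (p - b) - 4 * φ p)) := by
    intro p
    simp only [lapH, he1 p, he1' p, he2 p, he2' p]
    field_simp
  calc h ^ 2 * ∑ p : ZMod m × ZMod n, (Dx h φ p ^ 2 + Dy h φ p ^ 2)
      = ∑ p : ZMod m × ZMod n, ((φ (p + a) - φ p) ^ 2 + (φ (p + b) - φ p) ^ 2) := by
        rw [Finset.mul_sum]; exact Finset.sum_congr rfl fun p _ => L p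
    _ = ∑ p : ZMod m × ZMod n, -(φ p * (φ (p + a) + φ (p - a) + φ (p + b) + φ (p - b) - 4 * φ p)) :=
        sum_shift_id φ a b
    _ = -(h ^ 2 * ∑ p : ZMod m × ZMod n, φ p * lapH h φ p) := by
        rw [Finset.mul_sum, ← Finset.sum_neg_distrib]
        exact Finset.sum_congr rfl fun p _ => (R p).symm

set_option maxHeartbeats 1000000 in
/-- Coercivity of the discrete MPFC energy: there is a constant `C₅ > 0` depending only
on `α` (not on `h`, `m`, `n`, `Lx`, `Ly`) such that
`F(φ) ≥ C₅ ‖φ‖_{2,2}² − Lx·Ly/4` for every periodic grid function `φ`. -/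
theorem discrete_energy_coercive (α : ℝ) (hα : 0 < α) :
    ∃ C₅ > (0 : ℝ), ∀ (m n : ℕ) [NeZero m] [NeZero n] (h : ℝ), 0 < h →
      ∀ φ : Grid m n,
        energyF α h φ ≥ C₅ * norm22 h φ ^ 2 - ((m : ℝ) * h) * ((n : ℝ) * h) / 4 := by
  refine ⟨α / (6 + 2 * α), by positivity, ?_⟩
  intro m n _ _ h hh φ
  set C : ℝ := α / (6 + 2 * α) with hC
  have hden : (0 : ℝ) < 6 + 2 * α := by linarith
  have hCle : (6 + 2 * α) * C = α := by rw [hC]; field_simp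
  have hCpos : 0 < C := by positivity
  have hChalf : C < 1 / 2 := by
    rw [hC, div_lt_div_iff₀ hden (by norm_num)]; linarith
  set x := norm2 h φ with hxdef
  set g := gradNorm2 h φ with hgdef
  set y := norm2 h (lapH h φ) with hydef
  have hx0 : 0 ≤ x := Real.sqrt_nonneg _
  have hy0 : 0 ≤ y := Real.sqrt_nonneg _
  have hg0 : 0 ≤ g := Real.sqrt_nonneg _
  have hSx : (0:ℝ) ≤ h ^ 2 * ∑ p : ZMod m × ZMod n, φ p ^ 2 := by positivity
  have hSg : (0:ℝ) ≤ h ^ 2 * ∑ p : ZMod m × ZMod n, (Dx h φ p ^ 2 + Dy h φ p ^ 2) := by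
    have : ∀ p : ZMod m × ZMod n, (0:ℝ) ≤ Dx h φ p ^ 2 + Dy h φ p ^ 2 := fun p => by positivity
    positivity
  have hSy : (0:ℝ) ≤ h ^ 2 * ∑ p : ZMod m × ZMod n, lapH h φ p ^ 2 := by positivity
  have hx2 : x ^ 2 = h ^ 2 * ∑ p : ZMod m × ZMod n, φ p ^ 2 := Real.sq_sqrt hSx
  have hg2 : g ^ 2 = h ^ 2 * ∑ p : ZMod m × ZMod n, (Dx h φ p ^ 2 + Dy h φ p ^ 2) :=
    Real.sq_sqrt hSg
  have hy2 : y ^ 2 = h ^ 2 * ∑ p : ZMod m × ZMod n, lapH h φ p ^ 2 := Real.sq_sqrt hSy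
  have h22 : norm22 h φ ^ 2 = x ^ 2 + g ^ 2 + y ^ 2 := by
    rw [norm22, Real.sq_sqrt (by positivity)]
  -- L⁴ lower bound
  have hS4 : (0:ℝ) ≤ h ^ 2 * ∑ p : ZMod m × ZMod n, φ p ^ 4 := by positivity
  have h44 : norm4 h φ ^ 4 = h ^ 2 * ∑ p : ZMod m × ZMod n, φ p ^ 4 := by
    rw [norm4, ← Real.rpow_natCast (_ ^ ((1:ℝ)/4)) 4, ← Real.rpow_mul hS4]
    norm_num
  have hcard : (Finset.univ : Finset (ZMod m × ZMod n)).card = m * n := by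
    simp [Finset.card_univ, ZMod.card]
  have hptwise : ∑ p : ZMod m × ZMod n, (2 * φ p ^ 2 - 1) ≤ ∑ p : ZMod m × ZMod n, φ p ^ 4 :=
    Finset.sum_le_sum fun p _ => by nlinarith [sq_nonneg (φ p ^ 2 - 1)]
  have hsum1 : ∑ p : ZMod m × ZMod n, (2 * φ p ^ 2 - 1)
      = 2 * (∑ p : ZMod m × ZMod n, φ p ^ 2) - (m : ℝ) * n := by
    rw [Finset.sum_sub_distrib, ← Finset.mul_sum, Finset.sum_const, hcard]
    push_cast; ring
  have hL4 : 2 * x ^ 2 - (m : ℝ) * n * h ^ 2 ≤ norm4 h φ ^ 4 := by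
    rw [h44, hx2]
    have := hptwise
    rw [hsum1] at this
    nlinarith [sq_nonneg h]
  -- summation by parts and Cauchy–Schwarz
  have hsbp : g ^ 2 = -(h ^ 2 * ∑ p : ZMod m × ZMod n, φ p * lapH h φ p) := by
    rw [hg2]; exact sbp h hh.ne' φ
  have hcs : g ^ 2 ≤ x * y := by
    have hCS := Finset.sum_mul_sq_le_sq_mul_sq (Finset.univ : Finset (ZMod m × ZMod n))
      φ (lapH h φ)
    have h1 : (g ^ 2) ^ 2 = (h ^ 2) ^ 2 * (∑ p : ZMod m × ZMod n, φ p * lapH h φ p) ^ 2 := by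
      rw [hsbp]; ring
    have h2 : (g ^ 2) ^ 2 ≤ x ^ 2 * y ^ 2 := by
      rw [h1, hx2, hy2]
      have hsq : (0:ℝ) ≤ (h ^ 2) ^ 2 := sq_nonneg _
      calc (h ^ 2) ^ 2 * (∑ p : ZMod m × ZMod n, φ p * lapH h φ p) ^ 2
          ≤ (h ^ 2) ^ 2 * ((∑ p : ZMod m × ZMod n, φ p ^ 2)
              * ∑ p : ZMod m × ZMod n, lapH h φ p ^ 2) := by
            exact mul_le_mul_of_nonneg_left hCS hsq
        _ = h ^ 2 * (∑ p : ZMod m × ZMod n, φ p ^ 2)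
              * (h ^ 2 * ∑ p : ZMod m × ZMod n, lapH h φ p ^ 2) := by ring
    nlinarith [sq_nonneg g, mul_nonneg hx0 hy0]
  -- quadratic form nonnegativity
  have hq : (1 + C) ^ 2 ≤ 4 * ((1/2 + α/2) - C) * ((1/2) - C) := by
    nlinarith [sq_nonneg C]
  have hApos : (0:ℝ) < (1/2 + α/2) - C := by
    have : C < 1/2 := hChalf
    linarith
  have h4AD : (0:ℝ) ≤ 4 * ((1/2 + α/2) - C) * ((1/2) - C) - (1 + C) ^ 2 := by linarith
  have key : 0 ≤ ((1/2 + α/2) - C) * x ^ 2 - (1 + C) * (x * y) + ((1/2) - C) * y ^ 2 := by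
    nlinarith [sq_nonneg (2 * ((1/2 + α/2) - C) * x - (1 + C) * y),
      mul_nonneg h4AD (sq_nonneg y), hApos]
  have hgstep : (1 + C) * g ^ 2 ≤ (1 + C) * (x * y) :=
    mul_le_mul_of_nonneg_left hcs (by linarith)
  have hLL : ((m : ℝ) * h) * ((n : ℝ) * h) = (m : ℝ) * n * h ^ 2 := by ring
  rw [energyF, h22, ge_iff_le, hLL]
  nlinarith [hL4, key, hgstep]
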